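/- Let (A B; C D) be an invertible 2d×2d complex matrix written in d×d blocks, let U ⊆ ℂ be open and suppose x·C+D is invertible for all x ∈ U. Define the matrix Möbius function f(x) := (x·A+B)·(x·C+D)⁻¹ on U. Then f'(x) = (A − f(x)·C)·(x·C+D)⁻¹ is invertible for all x ∈ U, and the matrix-valued Schwartz derivative of f vanishes identically on U: S(f)(x) = 0 for all x ∈ U. -/

import Mathlib

open Matrix

attribute [local instance] Matrix.normedAddCommGroup Matrix.normedSpace

/-- The matrix-valued Schwartz derivative coefficient
`S(f) = ((f')⁻¹f'')' - (1/2)((f')⁻¹f'')²`. -/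
noncomputable def matS {d : ℕ} (f : ℂ → Matrix (Fin d) (Fin d) ℂ) :
    ℂ → Matrix (Fin d) (Fin d) ℂ :=
  fun x => deriv (fun t => (deriv f t)⁻¹ * deriv (deriv f) t) x
    - (1 / 2 : ℂ) • ((deriv f x)⁻¹ * deriv (deriv f) x) ^ 2

section aux

set_option linter.unusedTactic false
set_option linter.unnecessarySeqFocus false

theorem hasDerivAt_matrix {d : ℕ} {f : ℂ → Matrix (Fin d) (Fin d) ℂ}
    {f' : Matrix (Fin d) (Fin d) ℂ} {x : ℂ} :
    HasDerivAt f f' x ↔ ∀ i j, HasDerivAt (fun t => f t i j) (f' i j) x := by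
  exact hasDerivAt_pi.trans (forall_congr' fun i => hasDerivAt_pi)

theorem HasDerivAt.matmul {d : ℕ} {f g : ℂ → Matrix (Fin d) (Fin d) ℂ}
    {f' g' : Matrix (Fin d) (Fin d) ℂ} {x : ℂ}
    (hf : HasDerivAt f f' x) (hg : HasDerivAt g g' x) :
    HasDerivAt (fun t => f t * g t) (f' * g x + f x * g') x := by
  rw [hasDerivAt_matrix] at hf hg ⊢
  intro i j
  simp only [Matrix.mul_apply, Matrix.add_apply]
  refine HasDerivAt.congr_deriv (HasDerivAt.fun_sum fun k _ => (hf i k).mul (hg k j)) ?_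
  rw [← Finset.sum_add_distrib]

theorem isUnit_schur {d : ℕ} (A B C D : Matrix (Fin d) (Fin d) ℂ)
    (hblk : IsUnit (Matrix.fromBlocks A B C D)) (x : ℂ) (hg : IsUnit (x • C + D)) :
    IsUnit (A - (x • A + B) * (x • C + D)⁻¹ * C) := by
  set E1 : Matrix (Fin d) (Fin d) ℂ := 1 with hE1
  set E0 : Matrix (Fin d) (Fin d) ℂ := 0 with hE0
  set N := x • A + B
  set g := x • C + D
  set S := A - N * g⁻¹ * C with hS
  have hP : IsUnit (Matrix.fromBlocks (x • E1) E1 E1 E0) := by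
    have : Matrix.fromBlocks (x • E1) E1 E1 E0 *
        Matrix.fromBlocks E0 E1 E1 (-(x • E1)) = 1 := by
      rw [Matrix.fromBlocks_multiply, ← Matrix.fromBlocks_one]
      congr 1 <;> simp [hE1, hE0]
    exact @isUnit_of_invertible _ _ _ (invertibleOfRightInverse _ _ this)
  have hL : IsUnit (Matrix.fromBlocks E1 (-(N * g⁻¹)) E0 E1) := by
    have : Matrix.fromBlocks E1 (-(N * g⁻¹)) E0 E1 *
        Matrix.fromBlocks E1 (N * g⁻¹) E0 E1 = 1 := by
      rw [Matrix.fromBlocks_multiply, ← Matrix.fromBlocks_one]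
      congr 1 <;> simp [hE1, hE0]
    exact @isUnit_of_invertible _ _ _ (invertibleOfRightInverse _ _ this)
  have hJ : IsUnit (Matrix.fromBlocks E0 E1 E1 E0) := by
    have : Matrix.fromBlocks E0 E1 E1 E0 * Matrix.fromBlocks E0 E1 E1 E0 = 1 := by
      rw [Matrix.fromBlocks_multiply, ← Matrix.fromBlocks_one]
      congr 1 <;> simp [hE1, hE0]
    exact @isUnit_of_invertible _ _ _ (invertibleOfRightInverse _ _ this)
  have h1 : Matrix.fromBlocks A B C D * Matrix.fromBlocks (x • E1) E1 E1 E0 =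
      Matrix.fromBlocks N A g C := by
    rw [Matrix.fromBlocks_multiply]
    congr 1 <;> simp [N, g, hE1, hE0, Matrix.mul_smul, add_comm]
  have hinv : g⁻¹ * g = 1 := Matrix.nonsing_inv_mul g ((Matrix.isUnit_iff_isUnit_det g).mp hg)
  have h2 : Matrix.fromBlocks E1 (-(N * g⁻¹)) E0 E1 *
      Matrix.fromBlocks N A g C = Matrix.fromBlocks E0 S g C := by
    rw [Matrix.fromBlocks_multiply]
    congr 1 <;> simp [hS, hE1, hE0, mul_assoc, hinv, sub_eq_add_neg]
  have h3 : Matrix.fromBlocks E0 S g C * Matrix.fromBlocks E0 E1 E1 E0 =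
      Matrix.fromBlocks S E0 C g := by
    rw [Matrix.fromBlocks_multiply]
    congr 1 <;> simp [hE1, hE0]
  have hfin : IsUnit (Matrix.fromBlocks S E0 C g) := by
    rw [← h3, ← h2, ← h1]
    exact ((hL.mul (hblk.mul hP))).mul hJ
  rw [Matrix.isUnit_iff_isUnit_det] at hfin ⊢
  rw [hE0, Matrix.det_fromBlocks_zero₁₂] at hfin
  exact isUnit_of_mul_isUnit_left hfin

section main
variable {d : ℕ} (U : Set ℂ) (hU : IsOpen U) (A B C D : Matrix (Fin d) (Fin d) ℂ)
  (hden : ∀ x ∈ U, IsUnit (x • C + D)) (f : ℂ → Matrix (Fin d) (Fin d) ℂ)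
  (hf : ∀ x, f x = (x • A + B) * (x • C + D)⁻¹)

theorem hgD : ∀ t : ℂ, HasDerivAt (fun s : ℂ => s • C + D) C t := by
  intro t
  rw [hasDerivAt_matrix]
  intro i j
  simp only [Matrix.add_apply, Matrix.smul_apply, smul_eq_mul]
  simpa using ((hasDerivAt_id t).mul_const (C i j)).add_const (D i j)

theorem diffAt_det' {F : ℂ → Matrix (Fin d) (Fin d) ℂ} {x : ℂ}
    (hF : ∀ i j, DifferentiableAt ℂ (fun t => F t i j) x) :
    DifferentiableAt ℂ (fun t => (F t).det) x := by
  simp only [Matrix.det_apply]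
  apply DifferentiableAt.fun_sum
  intro σ _
  simp only [Units.smul_def, zsmul_eq_mul]
  exact (differentiableAt_const _).mul (DifferentiableAt.fun_finsetProd (fun i _ => hF (σ i) i))

theorem diffAt_inv' {F : ℂ → Matrix (Fin d) (Fin d) ℂ} {x : ℂ}
    (hF : ∀ i j, DifferentiableAt ℂ (fun t => F t i j) x)
    (hdet : (F x).det ≠ 0) :
    DifferentiableAt ℂ (fun t => (F t)⁻¹) x := by
  refine differentiableAt_pi.mpr fun i => ?_
  refine differentiableAt_pi.mpr fun j => ?_
  have hadj : DifferentiableAt ℂ (fun t => (F t).adjugate i j) x := by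
    simp only [Matrix.adjugate_apply]
    apply diffAt_det'
    intro k l
    simp only [Matrix.updateRow_apply]
    by_cases hkj : k = j <;> simp [hkj, hF]
  have heq : ∀ t, (F t)⁻¹ i j = ((F t).det)⁻¹ * (F t).adjugate i j := by
    intro t
    rw [Matrix.inv_def]
    simp [Ring.inverse_eq_inv']
  simp only [heq]
  exact ((diffAt_det' hF).inv hdet).mul hadj

include hU hden in
theorem hhD : ∀ t ∈ U, HasDerivAt (fun s : ℂ => (s • C + D)⁻¹)
    (-((t • C + D)⁻¹ * C * (t • C + D)⁻¹)) t := by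
  intro t ht
  have hdet : ∀ s ∈ U, IsUnit ((s • C + D).det) :=
    fun s hs => (Matrix.isUnit_iff_isUnit_det _).mp (hden s hs)
  have hdiff : DifferentiableAt ℂ (fun s : ℂ => (s • C + D)⁻¹) t := by
    apply diffAt_inv'
    · intro i j
      exact ((hasDerivAt_matrix.mp (hgD C D t)) i j).differentiableAt
    · exact (hdet t ht).ne_zero
  have H := hdiff.hasDerivAt
  have K := H.matmul (hgD C D t)
  have ev : (fun s : ℂ => (s • C + D)⁻¹ * (s • C + D)) =ᶠ[nhds t]
      (fun _ => (1 : Matrix (Fin d) (Fin d) ℂ)) := by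
    filter_upwards [hU.mem_nhds ht] with s hs
    exact Matrix.nonsing_inv_mul _ (hdet s hs)
  have K' : HasDerivAt (fun _ : ℂ => (1 : Matrix (Fin d) (Fin d) ℂ))
      (deriv (fun s : ℂ => (s • C + D)⁻¹) t * (t • C + D) + (t • C + D)⁻¹ * C) t :=
    K.congr_of_eventuallyEq ev.symm
  have huniq : deriv (fun s : ℂ => (s • C + D)⁻¹) t * (t • C + D) + (t • C + D)⁻¹ * C = 0 :=
    ((hasDerivAt_const t _).unique K').symm
  have hval : deriv (fun s : ℂ => (s • C + D)⁻¹) t = -((t • C + D)⁻¹ * C * (t • C + D)⁻¹) := by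
    have h1 : deriv (fun s : ℂ => (s • C + D)⁻¹) t * (t • C + D) = -((t • C + D)⁻¹ * C) := by
      rw [eq_neg_iff_add_eq_zero]; exact huniq
    calc deriv (fun s : ℂ => (s • C + D)⁻¹) t
        = deriv (fun s : ℂ => (s • C + D)⁻¹) t * ((t • C + D) * (t • C + D)⁻¹) := by
          rw [Matrix.mul_nonsing_inv _ (hdet t ht), mul_one]
      _ = (deriv (fun s : ℂ => (s • C + D)⁻¹) t * (t • C + D)) * (t • C + D)⁻¹ := by
          rw [mul_assoc]
      _ = -((t • C + D)⁻¹ * C * (t • C + D)⁻¹) := by rw [h1]; noncomm_ring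
  exact hval ▸ H

include hU hden hf in
theorem hfD : ∀ t ∈ U, HasDerivAt f ((A - f t * C) * (t • C + D)⁻¹) t := by
  intro t ht
  have hN : HasDerivAt (fun s : ℂ => s • A + B) A t := hgD A B t
  have key := hN.matmul (hhD U hU C D hden t ht)
  have : (fun s : ℂ => (s • A + B) * (s • C + D)⁻¹) = f := by
    funext s; rw [hf s]
  rw [this] at key
  refine key.congr_deriv ?_
  rw [hf t]
  noncomm_ring

include hU hden hf in
theorem hphiD : ∀ t ∈ U, HasDerivAt (fun s : ℂ => (A - f s * C) * (s • C + D)⁻¹)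
    (-((2:ℂ) • ((A - f t * C) * (t • C + D)⁻¹ * (C * (t • C + D)⁻¹)))) t := by
  intro t ht
  have p1 : HasDerivAt (fun s : ℂ => A - f s * C)
      (0 - ((A - f t * C) * (t • C + D)⁻¹ * C + f t * 0)) t :=
    (hasDerivAt_const t A).sub ((hfD U hU A B C D hden f hf t ht).matmul (hasDerivAt_const t C))
  refine (p1.matmul (hhD U hU C D hden t ht)).congr_deriv ?_
  rw [two_smul]
  noncomm_ring

end main
end aux

/-- The matrix Schwartz derivative of a matrix Möbius function vanishes, and its
derivative is `(A - f(x)C)(xC+D)⁻¹`, which is invertible. -/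
theorem matS_vanishes_on_matrix_moebius {d : ℕ} (U : Set ℂ) (hU : IsOpen U)
    (A B C D : Matrix (Fin d) (Fin d) ℂ)
    (hblk : IsUnit (Matrix.fromBlocks A B C D))
    (hden : ∀ x ∈ U, IsUnit (x • C + D))
    (f : ℂ → Matrix (Fin d) (Fin d) ℂ)
    (hf : ∀ x, f x = (x • A + B) * (x • C + D)⁻¹) :
    ∀ x ∈ U, deriv f x = (A - f x * C) * (x • C + D)⁻¹ ∧
      IsUnit (deriv f x) ∧ matS f x = 0 := by
  intro x hx
  have hd1 : ∀ t ∈ U, deriv f t = (A - f t * C) * (t • C + D)⁻¹ :=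
    fun t ht => (hfD U hU A B C D hden f hf t ht).deriv
  have hunit : ∀ t ∈ U, IsUnit (deriv f t) := by
    intro t ht
    rw [hd1 t ht]
    have h1 : IsUnit (A - f t * C) := by
      rw [hf t]; exact isUnit_schur A B C D hblk t (hden t ht)
    exact h1.mul (Matrix.isUnit_nonsing_inv_iff.mpr (hden t ht))
  have hd2 : ∀ t ∈ U, deriv (deriv f) t =
      -((2:ℂ) • ((A - f t * C) * (t • C + D)⁻¹ * (C * (t • C + D)⁻¹))) := by
    intro t ht
    have ev : deriv f =ᶠ[nhds t] (fun s => (A - f s * C) * (s • C + D)⁻¹) := by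
      filter_upwards [hU.mem_nhds ht] with s hs
      exact hd1 s hs
    exact ev.deriv_eq.trans (hphiD U hU A B C D hden f hf t ht).deriv
  have hpsi : ∀ t ∈ U, (deriv f t)⁻¹ * deriv (deriv f) t = -((2:ℂ) • (C * (t • C + D)⁻¹)) := by
    intro t ht
    have hXdet : IsUnit (((A - f t * C) * (t • C + D)⁻¹).det) :=
      (Matrix.isUnit_iff_isUnit_det _).mp (hd1 t ht ▸ hunit t ht)
    rw [hd1 t ht, hd2 t ht, mul_neg, mul_smul_comm, ← mul_assoc,
      Matrix.nonsing_inv_mul _ hXdet, one_mul]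
  refine ⟨hd1 x hx, hunit x hx, ?_⟩
  have evpsi : (fun t => (deriv f t)⁻¹ * deriv (deriv f) t) =ᶠ[nhds x]
      (fun t => -((2:ℂ) • (C * (t • C + D)⁻¹))) := by
    filter_upwards [hU.mem_nhds hx] with s hs
    exact hpsi s hs
  have hchi : HasDerivAt (fun t : ℂ => -((2:ℂ) • (C * (t • C + D)⁻¹)))
      ((2:ℂ) • (C * ((x • C + D)⁻¹ * C * (x • C + D)⁻¹))) x := by
    have base := (hasDerivAt_const x C).matmul (hhD U hU C D hden x hx)
    refine ((base.const_smul (2:ℂ)).neg).congr_deriv ?_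
    simp [mul_neg, smul_neg]
  unfold matS
  rw [show deriv (fun t => (deriv f t)⁻¹ * deriv (deriv f) t) x = _ from evpsi.deriv_eq,
    hchi.deriv, hpsi x hx]
  rw [sub_eq_zero, neg_sq, smul_pow, smul_smul]
  norm_num
  rw [pow_two]
  noncomm_ring
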